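/- Let R be a commutative ring and x₁,…,xₙ a regular sequence in R. Then the Koszul complex K(x₁,…,xₙ) (the exterior algebra on degree-1 generators u*₁,…,u*ₙ with δ(u*ᵢ) = xᵢ extended as a derivation) is a resolution of R/(x₁,…,xₙ): H₀ ≅ R/(x₁,…,xₙ) and Hᵢ = 0 for i > 0. -/

import Mathlib

/-- The degree-`i` part of the Koszul complex on `n` generators: the free module on the
`i`-element subsets `S` of `{1,…,n}` (monomials `u*_{j₁} ∧ … ∧ u*_{jᵢ}` in the exterior
algebra on the degree-1 generators `u*₁, …, u*ₙ`). -/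
abbrev KoszulPart (R : Type) [CommRing R] (n i : ℕ) : Type :=
  {S : Finset (Fin n) // S.card = i} → R

/-- The Koszul differential, the derivation determined by `δ(u*ⱼ) = xⱼ`:
`δ(u*_{j₁} ∧ … ∧ u*_{jᵢ}) = Σ_t (-1)^{t-1} x_{j_t} u*_{j₁} ∧ … ∧ û*_{j_t} ∧ … ∧ u*_{jᵢ}`,
written in terms of the coefficient functions on subsets. -/
noncomputable def koszulD (R : Type) [CommRing R] (n : ℕ) (x : Fin n → R) (i : ℕ) :
    KoszulPart R n (i + 1) →ₗ[R] KoszulPart R n i where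
  toFun f S := ∑ j : Fin n,
    if h : j ∈ S.1 then 0
    else ((-1 : R) ^ (S.1.filter (fun t => t < j)).card * x j) *
      f ⟨insert j S.1, by rw [Finset.card_insert_of_notMem h, S.2]⟩
  map_add' f g := by
    funext S
    simp only [Pi.add_apply, ← Finset.sum_add_distrib]
    refine Finset.sum_congr rfl fun j _ => ?_
    split
    · simp
    · simp [mul_add]
  map_smul' c f := by
    funext S
    simp only [Pi.smul_apply, smul_eq_mul, RingHom.id_apply, Finset.mul_sum]
    refine Finset.sum_congr rfl fun j _ => ?_
    split
    · simp
    · ring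

namespace KoszulAux

variable {R : Type} [CommRing R]

lemma koszulD_apply {n i : ℕ} (x : Fin n → R) (f : KoszulPart R n (i+1))
    (S : {S : Finset (Fin n) // S.card = i}) :
    koszulD R n x i f S = ∑ j : Fin n,
      if h : j ∈ S.1 then 0
      else ((-1 : R) ^ (S.1.filter (fun t => t < j)).card * x j) *
        f ⟨insert j S.1, by rw [Finset.card_insert_of_notMem h, S.2]⟩ := rfl

def emb (n : ℕ) : Fin n ↪ Fin (n+1) := ⟨Fin.castSucc, Fin.castSucc_injective n⟩

lemma last_not_mem_map {n : ℕ} (T : Finset (Fin n)) : Fin.last n ∉ T.map (emb n) := by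
  simp only [Finset.mem_map, emb, Function.Embedding.coeFn_mk]
  rintro ⟨k, -, hk⟩
  exact absurd hk (Fin.castSucc_lt_last k).ne

noncomputable def split1 (R : Type) [CommRing R] (n i : ℕ) :
    KoszulPart R (n+1) i →ₗ[R] KoszulPart R n i where
  toFun f S := f ⟨S.1.map (emb n), by rw [Finset.card_map]; exact S.2⟩
  map_add' f g := rfl
  map_smul' c f := rfl

noncomputable def split2 (R : Type) [CommRing R] (n i : ℕ) :
    KoszulPart R (n+1) (i+1) →ₗ[R] KoszulPart R n i where
  toFun f T := f ⟨insert (Fin.last n) (T.1.map (emb n)), by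
    rw [Finset.card_insert_of_notMem (last_not_mem_map T.1), Finset.card_map, T.2]⟩
  map_add' f g := rfl
  map_smul' c f := rfl

noncomputable def pb {n : ℕ} (S : Finset (Fin (n+1))) : Finset (Fin n) :=
  S.preimage Fin.castSucc ((Fin.castSucc_injective n).injOn)

lemma mem_pb {n : ℕ} {S : Finset (Fin (n+1))} {k : Fin n} :
    k ∈ pb S ↔ Fin.castSucc k ∈ S := Finset.mem_preimage

lemma pb_map {n : ℕ} (T : Finset (Fin n)) : pb (T.map (emb n)) = T := by
  ext k
  rw [mem_pb]
  exact Finset.mem_map' _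

lemma map_pb {n : ℕ} {S : Finset (Fin (n+1))} (h : Fin.last n ∉ S) :
    (pb S).map (emb n) = S := by
  ext j
  simp only [Finset.mem_map, emb, Function.Embedding.coeFn_mk]
  constructor
  · rintro ⟨k, hk, rfl⟩; exact mem_pb.mp hk
  · intro hj
    obtain ⟨k, rfl⟩ := Fin.exists_castSucc_eq.mpr (fun hj' => h (hj' ▸ hj))
    exact ⟨k, mem_pb.mpr hj, rfl⟩

lemma insert_map_pb {n : ℕ} {S : Finset (Fin (n+1))} (h : Fin.last n ∈ S) :
    insert (Fin.last n) ((pb S).map (emb n)) = S := by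
  ext j
  simp only [Finset.mem_insert, Finset.mem_map, emb, Function.Embedding.coeFn_mk]
  constructor
  · rintro (rfl | ⟨k, hk, rfl⟩)
    · exact h
    · exact mem_pb.mp hk
  · intro hj
    rcases eq_or_ne j (Fin.last n) with rfl | hne
    · exact Or.inl rfl
    · obtain ⟨k, rfl⟩ := Fin.exists_castSucc_eq.mpr hne
      exact Or.inr ⟨k, mem_pb.mpr hj, rfl⟩

lemma card_pb_of_not_mem {n i : ℕ} {S : Finset (Fin (n+1))} (h : Fin.last n ∉ S)
    (hc : S.card = i) : (pb S).card = i := by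
  have := congrArg Finset.card (map_pb h)
  rwa [Finset.card_map, hc] at this

lemma card_pb_of_mem {n i : ℕ} {S : Finset (Fin (n+1))} (h : Fin.last n ∈ S)
    (hc : S.card = i + 1) : (pb S).card = i := by
  have := congrArg Finset.card (insert_map_pb h)
  rw [Finset.card_insert_of_notMem (last_not_mem_map _), Finset.card_map, hc] at this
  omega

noncomputable def join {n i : ℕ} (a : KoszulPart R n (i+1)) (b : KoszulPart R n i) :
    KoszulPart R (n+1) (i+1) := fun S =>
  if h : Fin.last n ∈ S.1 then b ⟨pb S.1, card_pb_of_mem h S.2⟩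
  else a ⟨pb S.1, card_pb_of_not_mem h S.2⟩

lemma split1_join {n i : ℕ} (a : KoszulPart R n (i+1)) (b : KoszulPart R n i) :
    split1 R n (i+1) (join a b) = a := by
  funext S
  show join a b _ = a S
  rw [join, dif_neg (last_not_mem_map S.1)]
  exact congrArg a (Subtype.ext (pb_map S.1))

lemma split2_join {n i : ℕ} (a : KoszulPart R n (i+1)) (b : KoszulPart R n i) :
    split2 R n i (join a b) = b := by
  funext T
  show join a b _ = b T
  rw [join, dif_pos (Finset.mem_insert_self _ _)]
  refine congrArg b (Subtype.ext ?_)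
  show pb (insert (Fin.last n) (T.1.map (emb n))) = T.1
  ext k
  rw [mem_pb, Finset.mem_insert]
  constructor
  · rintro (hk | hk)
    · exact absurd hk (Fin.castSucc_lt_last k).ne
    · exact (Finset.mem_map' (emb n)).mp hk
  · intro hk
    exact Or.inr ((Finset.mem_map' (emb n)).mpr hk)

lemma split_injective {n i : ℕ} {f g : KoszulPart R (n+1) (i+1)}
    (h1 : split1 R n (i+1) f = split1 R n (i+1) g)
    (h2 : split2 R n i f = split2 R n i g) : f = g := by
  funext S
  by_cases h : Fin.last n ∈ S.1
  · calc f S = f ⟨insert (Fin.last n) ((pb S.1).map (emb n)), by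
          rw [Finset.card_insert_of_notMem (last_not_mem_map _), Finset.card_map,
            card_pb_of_mem h S.2]⟩ := congrArg f (Subtype.ext (insert_map_pb h)).symm
    _ = split2 R n i f ⟨pb S.1, card_pb_of_mem h S.2⟩ := rfl
    _ = split2 R n i g ⟨pb S.1, card_pb_of_mem h S.2⟩ := congrFun h2 _
    _ = g ⟨insert (Fin.last n) ((pb S.1).map (emb n)), by
          rw [Finset.card_insert_of_notMem (last_not_mem_map _), Finset.card_map,
            card_pb_of_mem h S.2]⟩ := rfl
    _ = g S := congrArg g (Subtype.ext (insert_map_pb h))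
  · calc f S = f ⟨(pb S.1).map (emb n), by
          rw [Finset.card_map]; exact card_pb_of_not_mem h S.2⟩ :=
            congrArg f (Subtype.ext (map_pb h)).symm
    _ = split1 R n (i+1) f ⟨pb S.1, card_pb_of_not_mem h S.2⟩ := rfl
    _ = split1 R n (i+1) g ⟨pb S.1, card_pb_of_not_mem h S.2⟩ := congrFun h1 _
    _ = g ⟨(pb S.1).map (emb n), by
          rw [Finset.card_map]; exact card_pb_of_not_mem h S.2⟩ := rfl
    _ = g S := congrArg g (Subtype.ext (map_pb h))

lemma deg0_injective {n : ℕ} {f g : KoszulPart R (n+1) 0}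
    (h1 : split1 R n 0 f = split1 R n 0 g) : f = g := by
  funext S
  have e : ((∅ : Finset (Fin n)).map (emb n)) = (∅ : Finset (Fin (n+1))) := Finset.map_empty _
  have hf : split1 R n 0 f ⟨∅, Finset.card_empty⟩ = f ⟨∅, Finset.card_empty⟩ :=
    congrArg f (Subtype.ext e)
  have hg : split1 R n 0 g ⟨∅, Finset.card_empty⟩ = g ⟨∅, Finset.card_empty⟩ :=
    congrArg g (Subtype.ext e)
  rw [show S = ⟨∅, Finset.card_empty⟩ from Subtype.ext (Finset.card_eq_zero.mp S.2),
    ← hf, ← hg, h1]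

/-- Key formula (A). -/
lemma split1_koszulD {n i : ℕ} (x : Fin (n+1) → R) (f : KoszulPart R (n+1) (i+1)) :
    split1 R n i (koszulD R (n+1) x i f)
      = koszulD R n (x ∘ Fin.castSucc) i (split1 R n (i+1) f)
        + ((-1 : R) ^ i * x (Fin.last n)) • split2 R n i f := by
  funext S
  show koszulD R (n+1) x i f ⟨S.1.map (emb n), _⟩ = _
  rw [koszulD_apply, Fin.sum_univ_castSucc]
  simp only [Pi.add_apply, Pi.smul_apply, smul_eq_mul]
  congr 1
  · rw [koszulD_apply]
    refine Finset.sum_congr rfl fun k _ => ?_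
    by_cases hk : k ∈ S.1
    · rw [dif_pos (show Fin.castSucc k ∈ S.1.map (emb n) from
        (Finset.mem_map' (emb n)).mpr hk), dif_pos hk]
    · rw [dif_neg (show Fin.castSucc k ∉ S.1.map (emb n) from
        fun hc => hk ((Finset.mem_map' (emb n)).mp hc)), dif_neg hk]
      have hfil : (Finset.filter (fun t => t < Fin.castSucc k) (S.1.map (emb n))).card
          = (Finset.filter (fun t => t < k) S.1).card := by
        rw [Finset.filter_map, Finset.card_map]
        refine congrArg Finset.card (Finset.filter_congr fun t _ => ?_)
        simp only [Function.comp_apply, emb, Function.Embedding.coeFn_mk,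
          Fin.castSucc_lt_castSucc_iff]
      rw [hfil]
      congr 1
      exact congrArg f (Subtype.ext (Finset.map_insert (emb n) k S.1).symm)
  · rw [dif_neg (last_not_mem_map S.1)]
    have hfil : (Finset.filter (fun t => t < Fin.last n) (S.1.map (emb n))).card = i := by
      rw [Finset.filter_true_of_mem, Finset.card_map, S.2]
      intro t ht
      obtain ⟨k, -, rfl⟩ := Finset.mem_map.mp ht
      exact Fin.castSucc_lt_last k
    rw [hfil]
    rfl

/-- Key formula (B). -/
lemma split2_koszulD {n i : ℕ} (x : Fin (n+1) → R) (f : KoszulPart R (n+1) (i+2)) :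
    split2 R n i (koszulD R (n+1) x (i+1) f)
      = koszulD R n (x ∘ Fin.castSucc) i (split2 R n (i+1) f) := by
  funext T
  show koszulD R (n+1) x (i+1) f ⟨insert (Fin.last n) (T.1.map (emb n)), _⟩ = _
  rw [koszulD_apply, Fin.sum_univ_castSucc, koszulD_apply]
  rw [dif_pos (Finset.mem_insert_self _ _), add_zero]
  refine Finset.sum_congr rfl fun k _ => ?_
  have hmem : Fin.castSucc k ∈ insert (Fin.last n) (T.1.map (emb n)) ↔ k ∈ T.1 := by
    rw [Finset.mem_insert]
    constructor
    · rintro (hk | hk)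
      · exact absurd hk (Fin.castSucc_lt_last k).ne
      · exact (Finset.mem_map' (emb n)).mp hk
    · intro hk; exact Or.inr ((Finset.mem_map' (emb n)).mpr hk)
  by_cases hk : k ∈ T.1
  · rw [dif_pos (hmem.mpr hk), dif_pos hk]
  · rw [dif_neg (fun hc => hk (hmem.mp hc)), dif_neg hk]
    have hfil : (Finset.filter (fun t => t < Fin.castSucc k)
        (insert (Fin.last n) (T.1.map (emb n)))).card
        = (Finset.filter (fun t => t < k) T.1).card := by
      rw [Finset.filter_insert,
        if_neg (show ¬ (Fin.last n < Fin.castSucc k) from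
          fun hc => lt_irrefl _ (hc.trans (Fin.castSucc_lt_last k))),
        Finset.filter_map, Finset.card_map]
      refine congrArg Finset.card (Finset.filter_congr fun t _ => ?_)
      simp only [Function.comp_apply, emb, Function.Embedding.coeFn_mk,
        Fin.castSucc_lt_castSucc_iff]
    rw [hfil]
    congr 1
    refine congrArg f (Subtype.ext ?_)
    show insert (Fin.castSucc k) (insert (Fin.last n) (T.1.map (emb n)))
        = insert (Fin.last n) ((insert k T.1).map (emb n))
    rw [Finset.map_insert, Finset.insert_comm]
    rfl

lemma koszulD_zero_ring {i : ℕ} (x : Fin 0 → R) (f : KoszulPart R 0 (i+1))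
    (S : {S : Finset (Fin 0) // S.card = i}) : koszulD R 0 x i f S = 0 := by
  rw [koszulD_apply]
  simp

/-- δ² = 0. -/
lemma koszulD_sq (n : ℕ) : ∀ (x : Fin n → R) (i : ℕ) (f : KoszulPart R n (i+2)),
    koszulD R n x i (koszulD R n x (i+1) f) = 0 := by
  induction n with
  | zero =>
    intro x i f
    funext S
    exact koszulD_zero_ring x _ S
  | succ n ih =>
    intro x i f
    have h1 : split1 R n i (koszulD R (n+1) x i (koszulD R (n+1) x (i+1) f)) = 0 := by
      rw [split1_koszulD, split1_koszulD, split2_koszulD]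
      rw [map_add, map_smul]
      rw [ih (x ∘ Fin.castSucc) i (split1 R n (i+2) f)]
      funext S
      simp only [Pi.add_apply, Pi.smul_apply, Pi.zero_apply, smul_eq_mul, zero_add]
      rw [pow_succ]
      ring
    cases i with
    | zero =>
      refine deg0_injective ?_
      rw [h1, map_zero]
    | succ m =>
      refine split_injective (g := 0) ?_ ?_
      · rw [h1, map_zero]
      · rw [map_zero, split2_koszulD, split2_koszulD,
          ih (x ∘ Fin.castSucc) m (split2 R n (m+2) f)]

lemma deg0_image_subset {n : ℕ} (x : Fin n → R) (c : KoszulPart R n 1) :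
    koszulD R n x 0 c ⟨∅, Finset.card_empty⟩ ∈ Ideal.span (Set.range x) := by
  rw [koszulD_apply]
  refine Ideal.sum_mem _ fun j _ => ?_
  rw [dif_neg (Finset.notMem_empty j)]
  exact Ideal.mul_mem_right _ _
    (Ideal.mul_mem_left _ _ (Ideal.subset_span ⟨j, rfl⟩))

lemma deg0_surj {n : ℕ} (x : Fin n → R) (b : R) (hb : b ∈ Ideal.span (Set.range x)) :
    ∃ c : KoszulPart R n 1, koszulD R n x 0 c ⟨∅, Finset.card_empty⟩ = b := by
  obtain ⟨r, hr⟩ := (Submodule.mem_span_range_iff_exists_fun R).mp hb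
  refine ⟨fun S => ∑ k ∈ S.1, r k, ?_⟩
  rw [koszulD_apply, ← hr]
  refine Finset.sum_congr rfl fun j _ => ?_
  rw [dif_neg (Finset.notMem_empty j)]
  simp only [Finset.filter_empty, Finset.card_empty, pow_zero, one_mul, smul_eq_mul]
  show x j * ∑ k ∈ insert j (∅ : Finset (Fin n)), r k = r j * x j
  rw [Finset.sum_insert (Finset.notMem_empty j), Finset.sum_empty, add_zero, mul_comm]

/-- Exactness for a regular sequence. -/
lemma koszul_exact : ∀ (n : ℕ) (x : Fin n → R),
    (∀ i : Fin n, ∀ r : R,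
      x i * r ∈ Ideal.span (x '' {j : Fin n | j < i}) →
        r ∈ Ideal.span (x '' {j : Fin n | j < i})) →
    ∀ (i : ℕ) (f : KoszulPart R n (i+1)), koszulD R n x i f = 0 →
    ∃ g : KoszulPart R n (i+2), koszulD R n x (i+1) g = f := by
  intro n
  induction n with
  | zero =>
    intro x _ i f _
    refine ⟨0, ?_⟩
    rw [map_zero]
    funext S
    have h0 : S.1 = ∅ := Finset.eq_empty_of_forall_notMem fun a => a.elim0
    exact absurd (h0 ▸ S.2) (by simp)
  | succ n ih =>
    intro x hreg i f hf
    set x' := x ∘ Fin.castSucc with hx'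
    have himg : ∀ i : Fin n, x' '' {j : Fin n | j < i}
        = x '' {j : Fin (n+1) | j < Fin.castSucc i} := by
      intro i
      ext r
      constructor
      · rintro ⟨k, hk, rfl⟩
        exact ⟨Fin.castSucc k, Fin.castSucc_lt_castSucc_iff.mpr hk, rfl⟩
      · rintro ⟨j, hj, rfl⟩
        have hjn : j ≠ Fin.last n := by
          intro hc
          rw [hc] at hj
          exact absurd ((Fin.castSucc_lt_last i).trans hj) (lt_irrefl _)
        obtain ⟨k, rfl⟩ := Fin.exists_castSucc_eq.mpr hjn
        exact ⟨k, Fin.castSucc_lt_castSucc_iff.mp hj, rfl⟩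
    have hreg' : ∀ i : Fin n, ∀ r : R,
        x' i * r ∈ Ideal.span (x' '' {j : Fin n | j < i}) →
          r ∈ Ideal.span (x' '' {j : Fin n | j < i}) := by
      intro i r h
      rw [himg i] at h ⊢
      exact hreg (Fin.castSucc i) r h
    have hrange : Set.range x' = x '' {j : Fin (n+1) | j < Fin.last n} := by
      ext r
      constructor
      · rintro ⟨k, rfl⟩
        exact ⟨Fin.castSucc k, Fin.castSucc_lt_last k, rfl⟩
      · rintro ⟨j, hj, rfl⟩
        obtain ⟨k, rfl⟩ := Fin.exists_castSucc_eq.mpr hj.ne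
        exact ⟨k, rfl⟩
    set a := split1 R n (i+1) f with ha
    set b := split2 R n i f with hb
    have hA : koszulD R n x' i a + ((-1:R)^i * x (Fin.last n)) • b = 0 := by
      rw [ha, hb, ← split1_koszulD, hf, map_zero]
    cases i with
    | zero =>
      have hb0 : x (Fin.last n) * b ⟨∅, Finset.card_empty⟩
          ∈ Ideal.span (x '' {j : Fin (n+1) | j < Fin.last n}) := by
        have hA0 := congrFun hA ⟨∅, Finset.card_empty⟩
        simp only [Pi.add_apply, Pi.smul_apply, Pi.zero_apply, smul_eq_mul,
          pow_zero, one_mul] at hA0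
        have h2 : x (Fin.last n) * b ⟨∅, Finset.card_empty⟩
            = - koszulD R n x' 0 a ⟨∅, Finset.card_empty⟩ := by linear_combination hA0
        rw [h2, ← hrange]
        exact neg_mem (deg0_image_subset x' a)
      have hbmem : b ⟨∅, Finset.card_empty⟩ ∈ Ideal.span (Set.range x') := by
        rw [hrange]
        exact hreg (Fin.last n) _ hb0
      obtain ⟨c, hc⟩ := deg0_surj x' _ hbmem
      have hcb : koszulD R n x' 0 c = b := by
        funext S
        rw [show S = ⟨∅, Finset.card_empty⟩ from Subtype.ext (Finset.card_eq_zero.mp S.2)]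
        exact hc
      set h := join (0 : KoszulPart R n 2) c with hh
      set f' := f - koszulD R (n+1) x 1 h with hf'
      have hs2 : split2 R n 0 f' = 0 := by
        rw [hf', map_sub, split2_koszulD, split2_join, hcb, ← hb, sub_self]
      have hs1 : split1 R n 1 f' = a + (x (Fin.last n)) • c := by
        rw [hf', map_sub, split1_koszulD, split1_join, split2_join, map_zero,
          zero_add, ← ha]
        funext S
        simp only [Pi.sub_apply, Pi.add_apply, Pi.smul_apply, smul_eq_mul, pow_one]
        ring
      set a' := a + (x (Fin.last n)) • c with ha'
      have hda' : koszulD R n x' 0 a' = 0 := by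
        rw [ha', map_add, map_smul, hcb]
        funext S
        have hAS := congrFun hA S
        simp only [Pi.add_apply, Pi.smul_apply, Pi.zero_apply, smul_eq_mul, pow_zero,
          one_mul] at hAS ⊢
        linear_combination hAS
      obtain ⟨d, hd⟩ := ih x' hreg' 0 a' hda'
      refine ⟨h + join d 0, ?_⟩
      rw [map_add]
      have e1 : koszulD R (n+1) x 1 (join d 0) = f' := by
        refine split_injective ?_ ?_
        · rw [split1_koszulD, split1_join, split2_join, smul_zero, add_zero, hd, hs1]
        · rw [split2_koszulD, split2_join, map_zero, hs2]
      rw [e1, hf']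
      abel
    | succ m =>
      have hdb : koszulD R n x' m b = 0 := by
        rw [hb, ← split2_koszulD, hf, map_zero]
      obtain ⟨c, hc⟩ := ih x' hreg' m b hdb
      set h := join (0 : KoszulPart R n (m+3)) c with hh
      set f' := f - koszulD R (n+1) x (m+2) h with hf'
      have hs2 : split2 R n (m+1) f' = 0 := by
        rw [hf', map_sub, split2_koszulD, split2_join, hc, ← hb, sub_self]
      have hs1 : split1 R n (m+2) f' = a - ((-1:R)^(m+2) * x (Fin.last n)) • c := by
        rw [hf', map_sub, split1_koszulD, split1_join, split2_join, map_zero,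
          zero_add, ← ha]
      set a' := a - ((-1:R)^(m+2) * x (Fin.last n)) • c with ha'
      have hda' : koszulD R n x' (m+1) a' = 0 := by
        rw [ha', map_sub, map_smul, hc]
        funext S
        have hAS := congrFun hA S
        simp only [Pi.add_apply, Pi.sub_apply, Pi.smul_apply, Pi.zero_apply,
          smul_eq_mul] at hAS ⊢
        rw [pow_succ]
        linear_combination hAS
      obtain ⟨d, hd⟩ := ih x' hreg' (m+1) a' hda'
      refine ⟨h + join d 0, ?_⟩
      rw [map_add]
      have e1 : koszulD R (n+1) x (m+2) (join d 0) = f' := by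
        refine split_injective ?_ ?_
        · rw [split1_koszulD, split1_join, split2_join, smul_zero, add_zero, hd, hs1]
        · rw [split2_koszulD, split2_join, map_zero, hs2]
      rw [e1, hf']
      abel

end KoszulAux

/-- Let `x₁,…,xₙ` be a regular sequence in the commutative ring `R`.
Then the Koszul complex `K(x₁,…,xₙ)` (the exterior algebra on degree-1 generators `u*ᵢ`
with `δ(u*ᵢ) = xᵢ` extended as a derivation) is a resolution of `R/(x₁,…,xₙ)`: it is a
complex, its homology vanishes in positive degrees (`Hᵢ = 0` for `i > 0`), and
`H₀ ≅ R/(x₁,…,xₙ)` (under the canonical identification of the degree-0 part with `R`,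
the image of `δ` is the ideal `(x₁,…,xₙ)`). -/
theorem stmt_13 (R : Type) [CommRing R] (n : ℕ) (x : Fin n → R)
    -- regular sequence: xᵢ is a non-zero-divisor modulo (x₁,…,x_{i-1}) …
    (hreg : ∀ i : Fin n, ∀ r : R,
      x i * r ∈ Ideal.span (x '' {j : Fin n | j < i}) →
        r ∈ Ideal.span (x '' {j : Fin n | j < i}))
    -- … and the ideal is proper
    (hproper : Ideal.span (Set.range x) ≠ ⊤) :
    -- K(x) is a complex: δ² = 0
    (∀ i : ℕ, (koszulD R n x i) ∘ₗ (koszulD R n x (i + 1)) = 0) ∧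
    -- Hᵢ = 0 for i > 0: exactness at each positive degree
    (∀ i : ℕ, LinearMap.ker (koszulD R n x i) ≤ LinearMap.range (koszulD R n x (i + 1))) ∧
    -- H₀ ≅ R/(x₁,…,xₙ): under evaluation at the empty subset, the image of δ in degree 0
    -- is exactly the ideal (x₁,…,xₙ)
    Submodule.map
      (LinearMap.proj (R := R) (φ := fun _ : {S : Finset (Fin n) // S.card = 0} => R)
        ⟨∅, Finset.card_empty⟩)
      (LinearMap.range (koszulD R n x 0)) = (Ideal.span (Set.range x) : Ideal R) := by
  refine ⟨?_, ?_, ?_⟩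
  · intro i
    apply LinearMap.ext
    intro f
    exact KoszulAux.koszulD_sq n x i f
  · intro i f hf
    obtain ⟨g, hg⟩ := KoszulAux.koszul_exact n x hreg i f (LinearMap.mem_ker.mp hf)
    exact ⟨g, hg⟩
  · apply le_antisymm
    · rintro r ⟨g, ⟨c, rfl⟩, rfl⟩
      exact KoszulAux.deg0_image_subset x c
    · intro r hr
      obtain ⟨c, hc⟩ := KoszulAux.deg0_surj x r hr
      exact ⟨koszulD R n x 0 c, ⟨c, rfl⟩, hc⟩
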